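/- Let P be a harmonic polynomial in m variables, homogeneous of degree k, and let s ∈ ℕ. Then the Fischer inner product satisfies ⟨r^{2s}·P, r^{2s}·P⟩ = 2^s · s! · (∏_{t=0}^{s-1}(2k + m + 2t)) · ⟨P, P⟩. -/

import Mathlib

open MvPolynomial Finset

noncomputable section

/-- The Laplacian `ΔP = ∑ ∂_i² P`. -/
def lap (m : ℕ) (P : MvPolynomial (Fin m) ℂ) : MvPolynomial (Fin m) ℂ :=
  ∑ i, pderiv i (pderiv i P)

/-- The Euler operator `E P = ∑ X_i ∂_i P`. -/
def eulerOp (m : ℕ) (P : MvPolynomial (Fin m) ℂ) : MvPolynomial (Fin m) ℂ :=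
  ∑ i, X i * pderiv i P

/-- The polynomial `r² = ∑ X_i²`. -/
def r2 (m : ℕ) : MvPolynomial (Fin m) ℂ := ∑ i, X i ^ 2

/-- The Fischer inner product `⟨P,Q⟩ = ∑_α (∏_i α_i!)·conj(coeff_α P)·coeff_α Q`. -/
def fischer (m : ℕ) (P Q : MvPolynomial (Fin m) ℂ) : ℂ :=
  ∑ α ∈ P.support, (∏ i, ((α i).factorial : ℂ)) * (starRingEnd ℂ) (coeff α P) * coeff α Q


def fw {m : ℕ} (α : Fin m →₀ ℕ) : ℂ := ∏ i, ((α i).factorial : ℂ)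

lemma coeff_pderiv {m : ℕ} (i : Fin m) (β : Fin m →₀ ℕ) (R : MvPolynomial (Fin m) ℂ) :
    coeff β (pderiv i R) = ((β i : ℂ) + 1) * coeff (Finsupp.single i 1 + β) R := by
  induction R using MvPolynomial.induction_on' with
  | monomial s a =>
    rw [pderiv_monomial, coeff_monomial, coeff_monomial]
    by_cases h : s = Finsupp.single i 1 + β
    · subst h
      have h1 : Finsupp.single i 1 + β - Finsupp.single i 1 = β := add_tsub_cancel_left _ _
      have h2 : ((Finsupp.single i 1 + β : Fin m →₀ ℕ) i) = β i + 1 := by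
        rw [Finsupp.add_apply, Finsupp.single_eq_same]; omega
      rw [if_pos h1, h2]
      simp only [if_true]; push_cast; ring
    · rw [if_neg h]
      by_cases h2 : s - Finsupp.single i 1 = β
      · rw [if_pos h2]
        have hsi : s i = 0 := by
          by_contra hne
          have hle : Finsupp.single i 1 ≤ s := by
            rw [Finsupp.single_le_iff]; omega
          have := tsub_add_cancel_of_le hle
          rw [h2] at this
          exact h (by rw [← this, add_comm])
        simp [hsi]
      · rw [if_neg h2]; ring
  | add p q hp hq => simp only [map_add, coeff_add, hp, hq]; ring

lemma fischer_eq {m : ℕ} (P Q : MvPolynomial (Fin m) ℂ) (S : Finset (Fin m →₀ ℕ))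
    (h : P.support ⊆ S) :
    fischer m P Q = ∑ α ∈ S, fw α * (starRingEnd ℂ) (coeff α P) * coeff α Q := by
  unfold fischer fw
  exact Finset.sum_subset h (fun α _ hα => by
    rw [MvPolynomial.notMem_support_iff] at hα; simp [hα])

lemma fischer_add_left {m : ℕ} (P₁ P₂ Q : MvPolynomial (Fin m) ℂ) :
    fischer m (P₁ + P₂) Q = fischer m P₁ Q + fischer m P₂ Q := by
  classical
  rw [fischer_eq (P₁ + P₂) Q (P₁.support ∪ P₂.support) MvPolynomial.support_add,
    fischer_eq P₁ Q (P₁.support ∪ P₂.support) Finset.subset_union_left,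
    fischer_eq P₂ Q (P₁.support ∪ P₂.support) Finset.subset_union_right,
    ← Finset.sum_add_distrib]
  refine Finset.sum_congr rfl fun α _ => ?_
  rw [coeff_add, map_add]; ring

lemma fischer_zero_left {m : ℕ} (Q : MvPolynomial (Fin m) ℂ) : fischer m 0 Q = 0 := by
  simp [fischer]

def fischerHom {m : ℕ} (Q : MvPolynomial (Fin m) ℂ) : MvPolynomial (Fin m) ℂ →+ ℂ where
  toFun P := fischer m P Q
  map_zero' := fischer_zero_left Q
  map_add' P₁ P₂ := fischer_add_left P₁ P₂ Q

lemma fischer_sum_left {m : ℕ} {ι : Type*} (s : Finset ι) (f : ι → MvPolynomial (Fin m) ℂ)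
    (Q : MvPolynomial (Fin m) ℂ) :
    fischer m (∑ i ∈ s, f i) Q = ∑ i ∈ s, fischer m (f i) Q :=
  map_sum (fischerHom Q) f s

lemma fischer_sum_right {m : ℕ} {ι : Type*} (s : Finset ι) (P : MvPolynomial (Fin m) ℂ)
    (f : ι → MvPolynomial (Fin m) ℂ) :
    fischer m P (∑ i ∈ s, f i) = ∑ i ∈ s, fischer m P (f i) := by
  unfold fischer
  rw [Finset.sum_comm]
  refine Finset.sum_congr rfl fun α _ => ?_
  rw [MvPolynomial.coeff_sum, Finset.mul_sum]

lemma fischer_smul_right {m : ℕ} (c : ℂ) (P Q : MvPolynomial (Fin m) ℂ) :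
    fischer m P (c • Q) = c * fischer m P Q := by
  unfold fischer
  rw [Finset.mul_sum]
  refine Finset.sum_congr rfl fun α _ => ?_
  rw [MvPolynomial.coeff_smul, smul_eq_mul]; ring

lemma fw_add_single {m : ℕ} (i : Fin m) (β : Fin m →₀ ℕ) :
    fw (Finsupp.single i 1 + β) = ((β i : ℂ) + 1) * fw β := by
  unfold fw
  have key : ∀ j : Fin m, ((((Finsupp.single i 1 + β : Fin m →₀ ℕ) j)).factorial : ℂ)
      = (if j = i then ((β i : ℂ) + 1) else 1) * ((β j).factorial : ℂ) := by
    intro j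
    by_cases h : j = i
    · subst h
      have : ((Finsupp.single j 1 + β : Fin m →₀ ℕ) j) = β j + 1 := by
        rw [Finsupp.add_apply, Finsupp.single_eq_same]; omega
      rw [this, if_pos rfl, Nat.factorial_succ]
      push_cast; ring
    · have : ((Finsupp.single i 1 + β : Fin m →₀ ℕ) j) = β j := by
        rw [Finsupp.add_apply, Finsupp.single_eq_of_ne' (Ne.symm h)]; omega
      rw [this, if_neg h, one_mul]
  rw [Finset.prod_congr rfl (fun j _ => key j), Finset.prod_mul_distrib]
  congr 1
  simp

lemma fischer_X_mul {m : ℕ} (i : Fin m) (Q R : MvPolynomial (Fin m) ℂ) :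
    fischer m (X i * Q) R = fischer m Q (pderiv i R) := by
  unfold fischer
  rw [MvPolynomial.support_X_mul i Q, Finset.sum_map]
  refine Finset.sum_congr rfl fun β _ => ?_
  simp only [addLeftEmbedding_apply]
  rw [MvPolynomial.coeff_X_mul, coeff_pderiv]
  have h := fw_add_single i β
  unfold fw at h
  rw [h]
  ring

lemma fischer_r2_mul {m : ℕ} (Q R : MvPolynomial (Fin m) ℂ) :
    fischer m (r2 m * Q) R = fischer m Q (lap m R) := by
  have h : r2 m * Q = ∑ i, X i * (X i * Q) := by
    unfold r2; rw [Finset.sum_mul]; refine Finset.sum_congr rfl fun i _ => ?_; ring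
  rw [h, fischer_sum_left]
  unfold lap
  rw [fischer_sum_right]
  refine Finset.sum_congr rfl fun i _ => ?_
  rw [fischer_X_mul, fischer_X_mul]

lemma euler_eq {m k : ℕ} (P : MvPolynomial (Fin m) ℂ) (hhom : P.IsHomogeneous k) :
    eulerOp m P = (k : ℂ) • P := by
  classical
  ext α
  rw [show eulerOp m P = ∑ i, X i * pderiv i P from rfl, MvPolynomial.coeff_sum,
    MvPolynomial.coeff_smul, smul_eq_mul]
  have term : ∀ i : Fin m, coeff α (X i * pderiv i P) = (α i : ℂ) * coeff α P := by
    intro i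
    rw [MvPolynomial.coeff_X_mul']
    by_cases h : i ∈ α.support
    · rw [if_pos h, coeff_pderiv]
      have hai : 1 ≤ α i := by
        rw [Finsupp.mem_support_iff] at h; omega
      have hle : Finsupp.single i 1 ≤ α := by rw [Finsupp.single_le_iff]; exact hai
      have h1 : Finsupp.single i 1 + (α - Finsupp.single i 1) = α := by
        rw [add_comm]; exact tsub_add_cancel_of_le hle
      have h2 : ((α - Finsupp.single i 1 : Fin m →₀ ℕ) i) = α i - 1 := by
        rw [Finsupp.tsub_apply, Finsupp.single_eq_same]
      rw [h1, h2]
      congr 1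
      have : (α i - 1) + 1 = α i := by omega
      exact_mod_cast congrArg (Nat.cast : ℕ → ℂ) this
    · have h0 : α i = 0 := Finsupp.notMem_support_iff.mp h
      rw [if_neg h, h0]
      simp
  rw [Finset.sum_congr rfl fun i _ => term i, ← Finset.sum_mul]
  by_cases hc : coeff α P = 0
  · simp [hc]
  · have hdeg := hhom hc
    have hs : (∑ i, (α i : ℂ)) = (k : ℂ) := by
      have hd : α.degree = k := by rwa [Finsupp.degree_eq_weight_one]
      have hn : ∑ i, α i = k := by
        rw [← hd]
        unfold Finsupp.degree
        exact (Finset.sum_subset (Finset.subset_univ _) (fun x _ hx => by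
          rwa [Finsupp.notMem_support_iff] at hx)).symm
      exact_mod_cast congrArg (Nat.cast : ℕ → ℂ) hn
    rw [← Nat.cast_sum] at hs ⊢
    rw [hs]

lemma pderiv_r2 {m : ℕ} (i : Fin m) : pderiv i (r2 m) = C 2 * X i := by
  unfold r2
  rw [map_sum]
  rw [Finset.sum_eq_single i]
  · rw [pow_two, pderiv_mul, pderiv_X_self]
    rw [show (C 2 : MvPolynomial (Fin m) ℂ) = 1 + 1 by rw [map_ofNat]; norm_num]
    ring
  · intro j _ hj
    rw [pow_two, pderiv_mul, pderiv_X_of_ne hj]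
    ring
  · intro h; exact absurd (Finset.mem_univ i) h

lemma lap_mul_r2 {m : ℕ} (Q : MvPolynomial (Fin m) ℂ) :
    lap m (r2 m * Q) = C ((2 * m : ℕ) : ℂ) * Q + C 4 * eulerOp m Q + r2 m * lap m Q := by
  have h2 : ∀ i : Fin m, pderiv i (pderiv i (r2 m * Q))
      = C 2 * Q + C 4 * (X i * pderiv i Q) + r2 m * pderiv i (pderiv i Q) := by
    intro i
    have h1 : pderiv i (r2 m * Q) = C 2 * (X i * Q) + r2 m * pderiv i Q := by
      rw [pderiv_mul, pderiv_r2]; ring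
    rw [h1, map_add, pderiv_mul, pderiv_mul, pderiv_mul, pderiv_X_self, pderiv_C, pderiv_r2]
    rw [show (C 4 : MvPolynomial (Fin m) ℂ) = C 2 + C 2 by rw [← map_add]; norm_num]
    ring
  unfold lap eulerOp
  calc ∑ i, pderiv i (pderiv i (r2 m * Q))
      = ∑ i : Fin m, (C 2 * Q + C 4 * (X i * pderiv i Q) + r2 m * pderiv i (pderiv i Q)) :=
        Finset.sum_congr rfl fun i _ => h2 i
    _ = C ((2 * m : ℕ) : ℂ) * Q + C 4 * ∑ i, (X i * pderiv i Q)
          + r2 m * ∑ i, pderiv i (pderiv i Q) := by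
        rw [Finset.sum_add_distrib, Finset.sum_add_distrib, Finset.sum_const, ← Finset.mul_sum,
          ← Finset.mul_sum, Finset.card_univ, Fintype.card_fin, nsmul_eq_mul]
        congr 2
        rw [← mul_assoc, ← map_natCast (C : ℂ →+* MvPolynomial (Fin m) ℂ) m, ← map_mul]
        congr 1
        push_cast
        ring

lemma r2_homog (m : ℕ) : (r2 m).IsHomogeneous 2 := by
  apply MvPolynomial.IsHomogeneous.sum
  intro i _
  simpa using (MvPolynomial.isHomogeneous_X ℂ i).pow 2

lemma lap_pow {m k : ℕ} (P : MvPolynomial (Fin m) ℂ)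
    (hharm : lap m P = 0) (hhom : P.IsHomogeneous k) (s : ℕ) :
    lap m (r2 m ^ (s + 1) * P)
      = ((2 * ((s : ℂ) + 1)) * (2 * k + m + 2 * s)) • (r2 m ^ s * P) := by
  have hpow : ∀ s : ℕ, (r2 m ^ s * P).IsHomogeneous (2 * s + k) := by
    intro s
    exact ((r2_homog m).pow s).mul hhom
  induction s with
  | zero =>
    rw [pow_one, pow_zero, one_mul, lap_mul_r2, euler_eq P hhom, hharm, mul_zero, add_zero,
      smul_eq_C_mul, smul_eq_C_mul, ← mul_assoc, ← MvPolynomial.C_mul, ← add_mul,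
      ← MvPolynomial.C_add]
    congr 1
    push_cast
    ring
  | succ s IH =>
    have hA : r2 m ^ (s + 2) * P = r2 m * (r2 m ^ (s + 1) * P) := by ring
    rw [hA, lap_mul_r2, euler_eq _ (hpow (s + 1)), IH,
      show r2 m * ((2 * ((s : ℂ) + 1) * (2 * (k : ℂ) + (m : ℂ) + 2 * (s : ℂ))) • (r2 m ^ s * P))
          = (2 * ((s : ℂ) + 1) * (2 * (k : ℂ) + (m : ℂ) + 2 * (s : ℂ))) • (r2 m ^ (s + 1) * P)
        from by rw [mul_smul_comm]; congr 1; ring,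
      smul_eq_C_mul, smul_eq_C_mul, smul_eq_C_mul, ← mul_assoc (C 4 : MvPolynomial (Fin m) ℂ), ← MvPolynomial.C_mul,
      ← add_mul, ← add_mul, ← MvPolynomial.C_add, ← MvPolynomial.C_add]
    congr 1
    push_cast
    ring

theorem stmt12 (m k s : ℕ) (P : MvPolynomial (Fin m) ℂ)
    (hharm : lap m P = 0) (hhom : P.IsHomogeneous k) :
    fischer m (r2 m ^ s * P) (r2 m ^ s * P)
      = (2 : ℂ) ^ s * (Nat.factorial s : ℂ)
          * (∏ t ∈ range s, (2 * (k : ℂ) + (m : ℂ) + 2 * (t : ℂ))) * fischer m P P := by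
  induction s with
  | zero => simp
  | succ s IH =>
    have hA : r2 m ^ (s + 1) * P = r2 m * (r2 m ^ s * P) := by ring
    calc fischer m (r2 m ^ (s + 1) * P) (r2 m ^ (s + 1) * P)
        = fischer m (r2 m * (r2 m ^ s * P)) (r2 m ^ (s + 1) * P) := by rw [← hA]
      _ = fischer m (r2 m ^ s * P) (lap m (r2 m ^ (s + 1) * P)) := fischer_r2_mul _ _
      _ = ((2 * ((s : ℂ) + 1)) * (2 * k + m + 2 * s)) * fischer m (r2 m ^ s * P) (r2 m ^ s * P) := by
          rw [lap_pow P hharm hhom s, fischer_smul_right]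
      _ = _ := by
          rw [IH, Finset.prod_range_succ, Nat.factorial_succ]
          push_cast
          ring


end
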